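/- For ν > 0 and r > 0 and all h ∈ ℝ^d, the Matérn function satisfies the scale mixture representation M(h; r, ν) = ∫_0^∞ exp(−‖h‖² ξ) · (r²/4)^ν · ξ^{−1−ν}/Γ(ν) · exp(−r²/(4ξ)) dξ, where M(h; r, ν) = (2^{1−ν}/Γ(ν)) (r‖h‖)^ν K_ν(r‖h‖) and K_ν is the modified Bessel function of the second kind. -/

import Mathlib

open MeasureTheory Real

/-- The modified Bessel function of the second kind, via its integral representation
`K_ν(x) = ∫_0^∞ exp(-x cosh t) cosh(ν t) dt`. -/
noncomputable def besselK (ν x : ℝ) : ℝ :=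
  ∫ t in Set.Ioi (0 : ℝ), Real.exp (-x * Real.cosh t) * Real.cosh (ν * t)

/-- The Matérn correlation function `M(h; r, ν)`, extended by continuity at `0`. -/
noncomputable def matern (t r ν : ℝ) : ℝ :=
  if t = 0 then 1
  else (2 : ℝ) ^ (1 - ν) / Real.Gamma ν * (r * t) ^ ν * besselK ν (r * t)

set_option maxHeartbeats 1000000

section aux
open Set

lemma gInt (ν c : ℝ) (hν : 0 < ν) (hc : 0 ≤ c) :
    IntegrableOn (fun u : ℝ => u ^ (ν - 1) * Real.exp (-u - c / u)) (Set.Ioi 0) := by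
  have hG := Real.GammaIntegral_convergent hν
  refine hG.mono' ?_ ?_
  · apply (ContinuousOn.mul ?_ ?_).aestronglyMeasurable measurableSet_Ioi
    · intro u hu
      exact (Real.continuousAt_rpow_const u _ (Or.inl (ne_of_gt hu))).continuousWithinAt
    · exact Real.continuous_exp.comp_continuousOn
        (continuousOn_id.neg.sub (continuousOn_const.div continuousOn_id fun u hu => ne_of_gt hu))
  · filter_upwards [ae_restrict_mem measurableSet_Ioi] with u hu
    have hu' : (0:ℝ) < u := hu
    rw [Real.norm_eq_abs, abs_of_nonneg (by positivity)]
    rw [mul_comm (Real.exp (-u))]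
    exact mul_le_mul_of_nonneg_left
      (Real.exp_le_exp.2 (by nlinarith [div_nonneg hc hu'.le]))
      (Real.rpow_nonneg hu'.le _)


lemma step1 (r ν t : ℝ) (hr : 0 < r) :
    (∫ ξ in Set.Ioi (0:ℝ),
        Real.exp (-t ^ 2 * ξ) * (r ^ 2 / 4) ^ ν * ξ ^ (-1 - ν) / Real.Gamma ν *
          Real.exp (-r ^ 2 / (4 * ξ)))
    = (Real.Gamma ν)⁻¹ *
        ∫ u in Set.Ioi (0:ℝ), u ^ (ν - 1) * Real.exp (-u - (r * t) ^ 2 / (4 * u)) := by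
  set c : ℝ := r ^ 2 / 4 with hc
  have hcpos : 0 < c := by positivity
  have key : (∫ ξ in Set.Ioi (0:ℝ),
      Real.exp (-t ^ 2 * ξ) * c ^ ν * ξ ^ (-1 - ν) * Real.exp (-r ^ 2 / (4 * ξ)))
      = ∫ u in Set.Ioi (0:ℝ), u ^ (ν - 1) * Real.exp (-u - (r * t) ^ 2 / (4 * u)) := by
    have himg : Set.Ioi (0:ℝ) = (fun u : ℝ => c * u⁻¹) '' Set.Ioi 0 := by
      ext y
      constructor
      · intro hy
        have hy' : (0:ℝ) < y := hy
        refine ⟨c / y, Set.mem_Ioi.2 (by positivity), ?_⟩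
        field_simp
      · rintro ⟨u, hu, rfl⟩
        have hu' : (0:ℝ) < u := hu
        exact Set.mem_Ioi.2 (by positivity)
    conv_lhs => rw [himg]
    rw [integral_image_eq_integral_abs_deriv_smul measurableSet_Ioi
      (f' := fun u => -(c * (u ^ 2)⁻¹))
      (fun u hu => ((hasDerivAt_inv (ne_of_gt hu)).const_mul c).hasDerivWithinAt.congr_deriv
        (by ring))
      (fun u hu v hv huv => by
        have hu' : (0:ℝ) < u := hu
        have hv' : (0:ℝ) < v := hv
        exact inv_injective (mul_left_cancel₀ hcpos.ne' huv))]
    refine setIntegral_congr_fun measurableSet_Ioi fun u hu => ?_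
    have hu' : (0:ℝ) < u := hu
    have h1 : -r ^ 2 / (4 * (c * u⁻¹)) = -u := by
      rw [hc]; field_simp
    have h2 : (c * u⁻¹) ^ (-1 - ν) = c ^ (-1 - ν) * u ^ (1 + ν) := by
      rw [Real.mul_rpow hcpos.le (by positivity), Real.inv_rpow hu'.le,
        ← Real.rpow_neg hu'.le, neg_sub']
      ring_nf
    have h3 : -t ^ 2 * (c * u⁻¹) = -((r * t) ^ 2 / (4 * u)) := by
      rw [hc]; field_simp
    have hcc : c * c ^ ν * c ^ (-1 - ν) = 1 := by
      nth_rewrite 1 [← Real.rpow_one c]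
      rw [← Real.rpow_add hcpos, ← Real.rpow_add hcpos]
      norm_num
    have huu : (u ^ 2)⁻¹ * u ^ (1 + ν) = u ^ (ν - 1) := by
      rw [← Real.rpow_natCast u 2, ← Real.rpow_neg hu'.le, ← Real.rpow_add hu']
      norm_num
      ring_nf
    rw [abs_neg, abs_of_pos (by positivity), smul_eq_mul, h1, h2, h3]
    trans ((c * c ^ ν * c ^ (-1 - ν)) * ((u ^ 2)⁻¹ * u ^ (1 + ν)) *
      (Real.exp (-((r * t) ^ 2 / (4 * u))) * Real.exp (-u)))
    · ring
    · rw [hcc, huu, ← Real.exp_add, one_mul]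
      congr 1
      ring
  rw [← key, ← integral_const_mul]
  exact setIntegral_congr_fun measurableSet_Ioi fun ξ _ => by ring

lemma step2 (ν x : ℝ) (hν : 0 < ν) (hx : 0 < x) :
    (∫ u in Set.Ioi (0:ℝ), u ^ (ν - 1) * Real.exp (-u - x ^ 2 / (4 * u)))
      = 2 ^ (1 - ν) * x ^ ν * besselK ν x := by
  have hx2 : (0:ℝ) < x / 2 := by positivity
  have himg : Set.Ioi (0:ℝ) = (fun s : ℝ => x / 2 * Real.exp s) '' Set.univ := by
    ext y
    simp only [Set.image_univ, Set.mem_range, Set.mem_Ioi]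
    constructor
    · intro hy
      exact ⟨Real.log (2 * y / x), by
        rw [Real.exp_log (by positivity)]; field_simp⟩
    · rintro ⟨s, rfl⟩
      positivity
  have hderiv : ∀ s ∈ Set.univ, HasDerivWithinAt (fun s : ℝ => x / 2 * Real.exp s)
      (x / 2 * Real.exp s) Set.univ s :=
    fun s _ => ((Real.hasDerivAt_exp s).const_mul (x / 2)).hasDerivWithinAt
  have hinj : Set.InjOn (fun s : ℝ => x / 2 * Real.exp s) Set.univ := by
    intro a _ b _ hab
    simp only [] at hab
    have := mul_left_cancel₀ (ne_of_gt hx2) hab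
    exact Real.exp_injective this
  have hpt : ∀ s : ℝ, |x / 2 * Real.exp s| •
      ((x / 2 * Real.exp s) ^ (ν - 1) *
        Real.exp (-(x / 2 * Real.exp s) - x ^ 2 / (4 * (x / 2 * Real.exp s))))
      = (x / 2) ^ ν * (Real.exp (-x * Real.cosh s) * Real.exp (ν * s)) := by
    intro s
    have he : (0:ℝ) < Real.exp s := Real.exp_pos s
    have h3 : -(x / 2 * Real.exp s) - x ^ 2 / (4 * (x / 2 * Real.exp s)) =
        -x * Real.cosh s := by
      rw [Real.cosh_eq, Real.exp_neg]
      field_simp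
      ring
    rw [h3, abs_of_pos (by positivity), smul_eq_mul]
    have h2 : x / 2 * Real.exp s * (x / 2 * Real.exp s) ^ (ν - 1) =
        (x / 2) ^ ν * Real.exp (ν * s) := by
      nth_rewrite 1 [← Real.rpow_one (x / 2 * Real.exp s)]
      rw [← Real.rpow_add (by positivity), Real.mul_rpow hx2.le he.le,
        ← Real.exp_mul]
      ring_nf
    calc x / 2 * Real.exp s * ((x / 2 * Real.exp s) ^ (ν - 1) * Real.exp (-x * Real.cosh s))
        = (x / 2 * Real.exp s * (x / 2 * Real.exp s) ^ (ν - 1)) * Real.exp (-x * Real.cosh s) := by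
          ring
      _ = (x / 2) ^ ν * (Real.exp (-x * Real.cosh s) * Real.exp (ν * s)) := by rw [h2]; ring
  -- integrability of F
  have hInt : Integrable (fun s : ℝ => Real.exp (-x * Real.cosh s) * Real.exp (ν * s)) := by
    have h1 := (integrableOn_image_iff_integrableOn_abs_deriv_smul MeasurableSet.univ hderiv hinj
      (fun u : ℝ => u ^ (ν - 1) * Real.exp (-u - x ^ 2 / (4 * u)))).mp
      (by rw [← himg]; exact gInt ν (x ^ 2 / 4) hν (by positivity) |>.congr_fun
            (fun u hu => by simp only [div_div]) measurableSet_Ioi)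
    rw [integrableOn_univ] at h1
    have h2 : Integrable (fun s : ℝ => (x / 2) ^ ν *
        (Real.exp (-x * Real.cosh s) * Real.exp (ν * s))) := h1.congr (by
      filter_upwards with s using hpt s)
    have := h2.const_mul ((x / 2) ^ (ν:ℝ))⁻¹
    refine this.congr ?_
    filter_upwards with s
    rw [← mul_assoc, inv_mul_cancel₀ (by positivity), one_mul]
  -- change of variables
  have key : (∫ u in Set.Ioi (0:ℝ), u ^ (ν - 1) * Real.exp (-u - x ^ 2 / (4 * u)))
      = (x / 2) ^ ν * ∫ s : ℝ, Real.exp (-x * Real.cosh s) * Real.exp (ν * s) := by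
    conv_lhs => rw [himg]
    rw [integral_image_eq_integral_abs_deriv_smul MeasurableSet.univ hderiv hinj,
      Measure.restrict_univ]
    rw [← integral_const_mul]
    exact integral_congr_ae (by filter_upwards with s using hpt s)
  -- evaluate the full-line integral
  have hsplit : (∫ s : ℝ, Real.exp (-x * Real.cosh s) * Real.exp (ν * s)) = 2 * besselK ν x := by
    rw [← intervalIntegral.integral_Iic_add_Ioi (b := 0) hInt.integrableOn hInt.integrableOn]
    have hneg : (∫ s in Set.Iic (0:ℝ), Real.exp (-x * Real.cosh s) * Real.exp (ν * s))
        = ∫ s in Set.Ioi (0:ℝ), Real.exp (-x * Real.cosh (-s)) * Real.exp (ν * (-s)) := by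
      have := integral_comp_neg_Iic (0:ℝ)
        (fun s => Real.exp (-x * Real.cosh (-s)) * Real.exp (ν * (-s)))
      simp only [neg_neg, neg_zero] at this
      exact this
    rw [hneg, ← integral_add ((hInt.comp_neg).integrableOn) hInt.integrableOn]
    rw [besselK, ← integral_const_mul]
    refine setIntegral_congr_fun measurableSet_Ioi fun s _ => ?_
    have hes : Real.exp (ν * -s) = (Real.exp (ν * s))⁻¹ := by
      rw [← Real.exp_neg]; ring_nf
    rw [Real.cosh_neg, Real.cosh_eq (ν * s), hes, Real.exp_neg (ν * s)]
    ring
  rw [key, hsplit]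
  rw [Real.div_rpow hx.le (by norm_num), Real.rpow_sub (by norm_num), Real.rpow_one]
  ring

end aux

/-- Scale mixture representation of the Matérn covariance function. -/
theorem matern_scale_mixture (d : ℕ) (r ν : ℝ) (hr : 0 < r) (hν : 0 < ν)
    (h : EuclideanSpace ℝ (Fin d)) :
    matern ‖h‖ r ν =
      ∫ ξ in Set.Ioi (0 : ℝ),
        Real.exp (-‖h‖ ^ 2 * ξ) * (r ^ 2 / 4) ^ ν * ξ ^ (-1 - ν) / Real.Gamma ν *
          Real.exp (-r ^ 2 / (4 * ξ)) := by
  have hΓ : Real.Gamma ν ≠ 0 := (Real.Gamma_pos_of_pos hν).ne'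
  rcases eq_or_ne ‖h‖ 0 with ht | ht
  · rw [ht, step1 r ν 0 hr]
    have hcong : ∀ u ∈ Set.Ioi (0:ℝ),
        u ^ (ν - 1) * Real.exp (-u - (r * 0) ^ 2 / (4 * u)) =
          Real.exp (-u) * u ^ (ν - 1) := by
      intro u hu
      norm_num [mul_comm]
    rw [setIntegral_congr_fun measurableSet_Ioi hcong, ← Real.Gamma_eq_integral hν,
      inv_mul_cancel₀ hΓ, matern, if_pos rfl]
  · have ht' : 0 < ‖h‖ := lt_of_le_of_ne (norm_nonneg h) (Ne.symm ht)
    rw [step1 r ν ‖h‖ hr, step2 ν (r * ‖h‖) hν (by positivity), matern, if_neg ht]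
    ring
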